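/- A matroid A on K(V), |V| ≥ m+1, with hyperplane family H is an m-dimensional abstract rigidity matroid if and only if (H1) every hyperplane has at most m−1 vertices of valence |V|−1, and (H2) for all v ∈ V and A ⊆ V\{v} with |A| = m−1, the set Δ_v^A := K({v} ∪ A) ∪ K(V \ {v}) is a hyperplane. -/

import Mathlib

set_option linter.unusedSectionVars false


open Matroid Set

/-- A circuit of a matroid: a minimal dependent set. -/
def Matroid.IsCircuit' {α : Type*} (M : Matroid α) (C : Set α) : Prop :=
  M.Dep C ∧ ∀ D, D ⊂ C → M.Indep D

/-- A cocircuit: a circuit of the dual matroid. -/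
def Matroid.IsCocircuit' {α : Type*} (M : Matroid α) (C : Set α) : Prop :=
  M✶.IsCircuit' C

/-- A hyperplane: a maximal subset of the ground set not containing a basis. -/
def Matroid.IsHyperplane {α : Type*} (M : Matroid α) (H : Set α) : Prop :=
  H ⊆ M.E ∧ (¬ ∃ B ⊆ H, M.IsBase B) ∧
    ∀ H', H ⊂ H' → H' ⊆ M.E → ∃ B ⊆ H', M.IsBase B

/-- The rank of a set: the size of a largest independent subset. -/
noncomputable def Matroid.rk {α : Type*} (M : Matroid α) (X : Set α) : ℕ :=
  sSup {n | ∃ I ⊆ X, M.Indep I ∧ I.ncard = n}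

/-- `cK U` is the edge set of the complete graph on the vertex set `U`. -/
def cK {V : Type*} (U : Set V) : Set (Sym2 V) :=
  {e | ¬ e.IsDiag ∧ ∀ v ∈ e, v ∈ U}

/-- The support (set of endpoints) of an edge set. -/
def supp {V : Type*} (E : Set (Sym2 V)) : Set V := {v | ∃ e ∈ E, v ∈ e}

/-- An edge set is rigid if its closure is the complete graph on its support. -/
def Rigid {V : Type*} (A : Matroid (Sym2 V)) (E : Set (Sym2 V)) : Prop :=
  A.closure E = cK (supp E)

/-- `A` is an `m`-dimensional abstract rigidity matroid on `K(W)`. -/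
def IsARMOn {V : Type*} (m : ℕ) (W : Set V) (A : Matroid (Sym2 V)) : Prop :=
  A.E = cK W ∧
  (∀ E F : Set (Sym2 V), E ⊆ cK W → F ⊆ cK W →
    (supp E ∩ supp F).ncard < m →
    A.closure (E ∪ F) ⊆ cK (supp E) ∪ cK (supp F)) ∧
  (∀ E F : Set (Sym2 V), E ⊆ cK W → F ⊆ cK W →
    Rigid A E → Rigid A F → m ≤ (supp E ∩ supp F).ncard →
    Rigid A (E ∪ F))

/-- The star of a vertex: all edges containing it. -/
def starv {V : Type*} (v : V) : Set (Sym2 V) := {e | ¬ e.IsDiag ∧ v ∈ e}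

/-- `C` is a vertex star minus `m-1` edges. -/
def IsStarMinus {V : Type*} (m : ℕ) (C : Set (Sym2 V)) : Prop :=
  ∃ v : V, ∃ D ⊆ starv v, D.ncard = m - 1 ∧ C = starv v \ D

/-- The valence (degree) of a vertex in an edge set. -/
noncomputable def valence {V : Type*} (C : Set (Sym2 V)) (v : V) : ℕ :=
  {e ∈ C | v ∈ e}.ncard

/-- `bigstar V' = K(V) \ K(V \ V')`. -/
def bigstar {V : Type*} (V' : Set V) : Set (Sym2 V) :=
  cK (univ : Set V) \ cK (V'ᶜ)

/-- The family `H_m(V)` of unions of two complete graphs covering `V` and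
meeting in `m-1` vertices. -/
def HmFam (m : ℕ) (V : Type*) : Set (Set (Sym2 V)) :=
  {H | ∃ V₁ V₂ : Set V, V₁ ∪ V₂ = univ ∧ (V₁ ∩ V₂).ncard = m - 1 ∧
    ¬ V₁ ⊆ V₂ ∧ ¬ V₂ ⊆ V₁ ∧ H = cK V₁ ∪ cK V₂}

/-- The family `H_m^{(1)}(K(X))` of sets `Δ_v^A` relative to a vertex set `X`. -/
def Hm1Fam {V : Type*} (m : ℕ) (X : Set V) : Set (Set (Sym2 V)) :=
  {H | ∃ v ∈ X, ∃ A ⊆ X \ {v}, A.ncard = m - 1 ∧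
    H = cK ({v} ∪ A) ∪ cK (X \ {v})}


/-! ### Auxiliary development -/

section Aux

open Matroid Set

variable {V : Type*} [Fintype V] [DecidableEq V]

/-- The hyperplane `Δ_v^S`. -/
def Delta (v : V) (S : Set V) : Set (Sym2 V) := cK ({v} ∪ S) ∪ cK ({v}ᶜ)

/-- Edges joining `v` to the set `S`. -/
def vjoin (v : V) (S : Set V) : Set (Sym2 V) := (fun u => s(v, u)) '' S

lemma mem_cK {U : Set V} {x y : V} : s(x, y) ∈ cK U ↔ x ≠ y ∧ x ∈ U ∧ y ∈ U := by
  simp only [cK, mem_setOf_eq, Sym2.isDiag_iff_proj_eq]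
  constructor
  · rintro ⟨h1, h2⟩
    exact ⟨h1, h2 x (by simp), h2 y (by simp)⟩
  · rintro ⟨h1, hx, hy⟩
    refine ⟨h1, ?_⟩
    intro v hv
    rcases Sym2.mem_iff.1 hv with rfl | rfl <;> assumption

lemma cK_cases {U : Set V} {e : Sym2 V} (he : e ∈ cK U) :
    ∃ x y, x ≠ y ∧ x ∈ U ∧ y ∈ U ∧ e = s(x, y) := by
  induction e with
  | _ x y => obtain ⟨h1, hx, hy⟩ := mem_cK.1 he; exact ⟨x, y, h1, hx, hy, rfl⟩

lemma cK_mono {U₁ U₂ : Set V} (h : U₁ ⊆ U₂) : cK U₁ ⊆ cK U₂ := by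
  intro e he
  obtain ⟨x, y, hxy, hx, hy, rfl⟩ := cK_cases he
  exact mem_cK.2 ⟨hxy, h hx, h hy⟩

lemma cK_inter (U₁ U₂ : Set V) : cK U₁ ∩ cK U₂ = cK (U₁ ∩ U₂) := by
  ext e
  constructor
  · rintro ⟨h1, h2⟩
    obtain ⟨x, y, hxy, hx, hy, rfl⟩ := cK_cases h1
    obtain ⟨-, hx2, hy2⟩ := mem_cK.1 h2
    exact mem_cK.2 ⟨hxy, ⟨hx, hx2⟩, ⟨hy, hy2⟩⟩
  · intro h
    exact ⟨cK_mono inter_subset_left h, cK_mono inter_subset_right h⟩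

lemma cK_empty : cK (∅ : Set V) = ∅ := by
  ext e
  simp only [mem_empty_iff_false, iff_false]
  intro h
  obtain ⟨x, y, -, hx, -, -⟩ := cK_cases h
  exact hx

lemma cK_eq_empty {U : Set V} (h : U.ncard ≤ 1) : cK U = ∅ := by
  ext e
  simp only [mem_empty_iff_false, iff_false]
  intro hh
  obtain ⟨x, y, hxy, hx, hy, -⟩ := cK_cases hh
  have : 1 < U.ncard := (one_lt_ncard_iff U.toFinite).2 ⟨x, y, hx, hy, hxy⟩
  omega

lemma mem_supp {E' : Set (Sym2 V)} {v : V} : v ∈ supp E' ↔ ∃ e ∈ E', v ∈ e := Iff.rfl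

lemma supp_union (X Y : Set (Sym2 V)) : supp (X ∪ Y) = supp X ∪ supp Y := by
  ext v
  simp only [supp, mem_setOf_eq, mem_union]
  constructor
  · rintro ⟨e, (h | h), hv⟩
    · exact Or.inl ⟨e, h, hv⟩
    · exact Or.inr ⟨e, h, hv⟩
  · rintro (⟨e, h, hv⟩ | ⟨e, h, hv⟩)
    · exact ⟨e, Or.inl h, hv⟩
    · exact ⟨e, Or.inr h, hv⟩

lemma supp_empty : supp (∅ : Set (Sym2 V)) = ∅ := by
  ext v; simp [supp]

lemma supp_subset {X : Set (Sym2 V)} {U : Set V} (h : X ⊆ cK U) : supp X ⊆ U := by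
  rintro v ⟨e, he, hv⟩
  exact (h he).2 v hv

lemma subset_cK_supp {X : Set (Sym2 V)} (h : X ⊆ cK univ) : X ⊆ cK (supp X) := by
  intro e he
  obtain ⟨x, y, hxy, -, -, rfl⟩ := cK_cases (h he)
  exact mem_cK.2 ⟨hxy, ⟨_, he, by simp⟩, ⟨_, he, by simp⟩⟩

lemma supp_cK {U : Set V} (h : 2 ≤ U.ncard) : supp (cK U) = U := by
  refine subset_antisymm (supp_subset subset_rfl) ?_
  intro u hu
  obtain ⟨a, b, ha, hb, hab⟩ := (one_lt_ncard_iff U.toFinite).1 (by omega)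
  rcases eq_or_ne u a with rfl | hua
  · exact ⟨s(u, b), mem_cK.2 ⟨hab, hu, hb⟩, by simp⟩
  · exact ⟨s(u, a), mem_cK.2 ⟨hua, hu, ha⟩, by simp⟩

lemma vjoin_subset_cK {v : V} {S U : Set V} (hv : v ∈ U) (hS : S ⊆ U) (hvS : v ∉ S) :
    vjoin v S ⊆ cK U := by
  rintro e ⟨u, hu, rfl⟩
  exact mem_cK.2 ⟨fun h => hvS (h ▸ hu), hv, hS hu⟩

lemma mem_vjoin {v : V} {S : Set V} {e : Sym2 V} : e ∈ vjoin v S ↔ ∃ u ∈ S, e = s(v, u) := by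
  simp only [vjoin, mem_image]
  exact ⟨fun ⟨u, hu, he⟩ => ⟨u, hu, he.symm⟩, fun ⟨u, hu, he⟩ => ⟨u, hu, he.symm⟩⟩

lemma vjoin_insert (v : V) (u : V) (S : Set V) :
    vjoin v (insert u S) = insert (s(v, u)) (vjoin v S) := by
  simp [vjoin, image_insert_eq]

lemma ncard_univ_V : (univ : Set V).ncard = Fintype.card V := by
  rw [ncard_univ, Nat.card_eq_fintype_card]

/-- padding a set to a given size inside a superset -/
lemma exists_between_ncard {s t : Set V} {n : ℕ} (hst : s ⊆ t) (h1 : s.ncard ≤ n)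
    (h2 : n ≤ t.ncard) : ∃ u : Set V, s ⊆ u ∧ u ⊆ t ∧ u.ncard = n := by
  obtain ⟨p, hp, hpcard⟩ := Set.exists_subset_card_eq (s := t \ s) (n := n - s.ncard)
    (by rw [ncard_diff hst s.toFinite]; have := ncard_le_ncard hst t.toFinite; omega)
  refine ⟨s ∪ p, subset_union_left, union_subset hst (hp.trans diff_subset), ?_⟩
  rw [ncard_union_eq (disjoint_of_subset_right hp disjoint_sdiff_right) s.toFinite
    (p.toFinite), hpcard]
  omega

lemma starv_eq_image (v : V) : starv v = (fun u => s(v, u)) '' ({v}ᶜ) := by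
  ext e
  constructor
  · rintro ⟨hnd, hv⟩
    induction e with
    | _ x y =>
      rcases Sym2.mem_iff.1 hv with rfl | rfl
      · refine ⟨y, fun h => hnd ?_, rfl⟩
        simp only [mem_singleton_iff] at h
        simp [Sym2.isDiag_iff_proj_eq, h]
      · refine ⟨x, fun h => hnd ?_, Sym2.eq_swap⟩
        simp only [mem_singleton_iff] at h
        simp [Sym2.isDiag_iff_proj_eq, h]
  · rintro ⟨u, hu, rfl⟩
    have huv : u ≠ v := fun h => hu (by simp [h])
    refine ⟨?_, by simp⟩
    simp only [Sym2.isDiag_iff_proj_eq]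
    exact fun h => huv h.symm

lemma ncard_starv (v : V) : (starv v).ncard = Fintype.card V - 1 := by
  rw [starv_eq_image]
  rw [ncard_image_of_injective _ (fun a b h => Sym2.congr_right.1 h)]
  rw [show ({v}ᶜ : Set V) = univ \ {v} by ext; simp]
  rw [ncard_diff (subset_univ _) (toFinite _), ncard_univ_V, ncard_singleton]

end Aux

section ErTheory

open Matroid Set

variable {α : Type*} {M : Matroid α} {X Y I : Set α} {e : α}

/-- rank of a set in a matroid, as the cardinal of any basis'. -/
noncomputable def erx (M : Matroid α) (X : Set α) : ℕ∞ := (M.exists_isBasis' X).choose.encard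

lemma Matroid.IsBasis'.encard_erx (h : M.IsBasis' I X) : I.encard = erx M X :=
  (Matroid.isBase_restrict_iff'.2 h).encard_eq_encard_of_isBase
    (Matroid.isBase_restrict_iff'.2 (M.exists_isBasis' X).choose_spec)

lemma Matroid.IsBasis.encard_erx (h : M.IsBasis I X) : I.encard = erx M X :=
  h.isBasis'.encard_erx

lemma erx_mono (M : Matroid α) (h : X ⊆ Y) : erx M X ≤ erx M Y := by
  obtain ⟨I, hI⟩ := M.exists_isBasis' X
  obtain ⟨J, hJ, hIJ⟩ := hI.indep.subset_isBasis'_of_subset (hI.subset.trans h)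
  rw [← hI.encard_erx, ← hJ.encard_erx]
  exact encard_mono hIJ

lemma erx_closure_eq (M : Matroid α) (hX : X ⊆ M.E) : erx M (M.closure X) = erx M X := by
  obtain ⟨I, hI⟩ := M.exists_isBasis X hX
  rw [← hI.encard_erx, ← hI.isBasis_closure_right.encard_erx]

lemma Matroid.Indep.encard_le_erx (hI : M.Indep I) (hIX : I ⊆ X) : I.encard ≤ erx M X := by
  obtain ⟨J, hJ, hIJ⟩ := hI.subset_isBasis'_of_subset hIX
  rw [← hJ.encard_erx]
  exact encard_mono hIJ

lemma erx_insert_of_not_mem_closure (M : Matroid α) (hX : X ⊆ M.E) (he : e ∈ M.E)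
    (heX : e ∉ M.closure X) : erx M (insert e X) = erx M X + 1 := by
  obtain ⟨I, hI⟩ := M.exists_isBasis X hX
  have hclI : M.closure I = M.closure X := hI.closure_eq_closure
  have heI : e ∉ I := fun h => heX (M.subset_closure X hX (hI.subset h))
  have hind : M.Indep (insert e I) := by
    rw [hI.indep.insert_indep_iff_of_notMem heI, hclI]
    exact ⟨he, heX⟩
  have hbasis : M.IsBasis (insert e I) (insert e X) := by
    refine hind.isBasis_of_subset_of_subset_closure (insert_subset_insert hI.subset) ?_
    refine insert_subset (M.subset_closure _ hind.subset_ground (mem_insert _ _)) ?_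
    refine (hI.subset_closure).trans (M.closure_subset_closure (subset_insert _ _))
  rw [← hbasis.encard_erx, ← hI.encard_erx, encard_insert_of_notMem heI]

lemma erx_submod (M : Matroid α) (hX : X ⊆ M.E) (hY : Y ⊆ M.E) :
    erx M (X ∪ Y) + erx M (X ∩ Y) ≤ erx M X + erx M Y := by
  obtain ⟨I, hI⟩ := M.exists_isBasis (X ∩ Y) ((inter_subset_left).trans hX)
  obtain ⟨J, hJ, hIJ⟩ := hI.indep.subset_isBasis_of_subset
    (hI.subset.trans ((inter_subset_left).trans subset_union_left)) (union_subset hX hY)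
  have hJXY : J ⊆ X ∪ Y := hJ.subset
  have hkey : J ∩ (X ∩ Y) = I := by
    refine (hI.eq_of_subset_indep (hJ.indep.subset inter_subset_left)
      (subset_inter hIJ hI.subset) inter_subset_right).symm
  have hsplit : (J ∩ X) ∪ (J ∩ Y) = J := by
    rw [← inter_union_distrib_left]
    exact inter_eq_left.2 hJXY
  have hsplit2 : (J ∩ X) ∩ (J ∩ Y) = I := by
    rw [← hkey]; ext a; simp only [mem_inter_iff]; tauto
  have hcard : (J ∩ X).encard + (J ∩ Y).encard = J.encard + I.encard := by
    rw [← Set.encard_union_add_encard_inter, hsplit, hsplit2]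
  rw [← hJ.encard_erx, ← hI.encard_erx, ← hcard]
  exact add_le_add ((hJ.indep.subset inter_subset_left).encard_le_erx inter_subset_right)
    ((hJ.indep.subset inter_subset_left).encard_le_erx inter_subset_right)

lemma erx_spanning (M : Matroid α) (hX : X ⊆ M.E) (h : M.Spanning X) :
    erx M X = erx M M.E := by
  rw [← erx_closure_eq M hX, (Matroid.spanning_iff_closure_eq hX).1 h]

end ErTheory

section Hyp

open Matroid Set

variable {α : Type*} {M : Matroid α} {H X : Set α} {e : α}

lemma Matroid.IsHyperplane.not_spanning (h : M.IsHyperplane H) : ¬ M.Spanning H := by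
  intro hs
  obtain ⟨B, hB, hBH⟩ := hs.exists_isBase_subset
  exact h.2.1 ⟨B, hBH, hB⟩

lemma Matroid.IsHyperplane.spanning_of_ssuperset (h : M.IsHyperplane H) (hss : H ⊂ X)
    (hX : X ⊆ M.E) : M.Spanning X := by
  obtain ⟨B, hBX, hB⟩ := h.2.2 X hss hX
  exact (Matroid.spanning_iff_closure_eq hX).2
    (subset_antisymm (M.closure_subset_ground X) (hB.closure_eq ▸ M.closure_subset_closure hBX))

lemma Matroid.IsHyperplane.closure_eq (h : M.IsHyperplane H) : M.closure H = H := by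
  by_contra hne
  have hsub : H ⊆ M.closure H := M.subset_closure H h.1
  obtain ⟨e, he, heH⟩ := exists_of_ssubset (hsub.ssubset_of_ne (fun h => hne h.symm))
  have heE : e ∈ M.E := M.mem_ground_of_mem_closure he
  have hsp := h.spanning_of_ssuperset (ssubset_insert heH) (insert_subset heE h.1)
  have : M.closure (insert e H) = M.E := (Matroid.spanning_iff_closure_eq
    (insert_subset heE h.1)).1 hsp
  rw [Matroid.closure_insert_eq_of_mem_closure he] at this
  exact h.not_spanning ((Matroid.spanning_iff_closure_eq h.1).2 this)

lemma Matroid.IsHyperplane.not_mem (h : M.IsHyperplane H) (hXH : X ⊆ H) (heX : e ∈ M.closure X)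
    (heH : e ∉ H) : False :=
  heH (h.closure_eq ▸ M.closure_subset_closure hXH heX)

lemma exists_hyperplane_superset [Finite α] (hX : X ⊆ M.E) (hns : ¬ M.Spanning X) :
    ∃ H, M.IsHyperplane H ∧ X ⊆ H := by
  classical
  set F : Set (Set α) := {Y | X ⊆ Y ∧ Y ⊆ M.E ∧ ¬ M.Spanning Y} with hF
  have hne : F.Nonempty := ⟨X, subset_rfl, hX, hns⟩
  obtain ⟨H, hHF, hmax⟩ := Set.Finite.exists_maximalFor id F (Set.toFinite F) hne
  obtain ⟨hXH, hHE, hHns⟩ := hHF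
  refine ⟨H, ⟨hHE, ?_, ?_⟩, hXH⟩
  · rintro ⟨B, hBH, hB⟩
    exact hHns ((Matroid.spanning_iff_closure_eq hHE).2
      (subset_antisymm (M.closure_subset_ground H)
        (hB.closure_eq ▸ M.closure_subset_closure hBH)))
  · intro H' hss hH'E
    by_contra hnex
    have hH'ns : ¬ M.Spanning H' := by
      intro hsp
      obtain ⟨B, hB, hBH'⟩ := hsp.exists_isBase_subset
      exact hnex ⟨B, hBH', hB⟩
    have : H = H' := subset_antisymm hss.subset (hmax ⟨hXH.trans hss.subset, hH'E, hH'ns⟩ hss.subset)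
    exact hss.ne this

end Hyp

section Core

open Matroid Set

variable {V : Type*} [Fintype V] [DecidableEq V] {m : ℕ} {A : Matroid (Sym2 V)}

lemma cK_subset_ground (hE : A.E = cK (univ : Set V)) (U : Set V) : cK U ⊆ A.E := by
  rw [hE]; exact cK_mono (subset_univ U)

/-- from (H1): the union of `m` vertex stars is spanning -/
lemma stars_spanning (hm : 0 < m) (hV : 2 ≤ Fintype.card V)
    (hE : A.E = cK (univ : Set V))
    (hH1 : ∀ H, A.IsHyperplane H →
      {v | v ∈ supp H ∧ valence H v = Fintype.card V - 1}.ncard ≤ m - 1)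
    {J : Set V} (hJ : J.ncard = m) :
    A.closure (⋃ s ∈ J, starv s) = A.E := by
  classical
  set X : Set (Sym2 V) := ⋃ s ∈ J, starv s with hX
  have hXE : X ⊆ A.E := by
    rw [hE]
    rintro e he
    simp only [hX, mem_iUnion] at he
    obtain ⟨s, -, hnd, -⟩ := he
    obtain ⟨x, y⟩ := e
    exact mem_cK.2 ⟨fun h => hnd (by simp [Sym2.isDiag_iff_proj_eq, h]), trivial, trivial⟩
  by_contra hne
  have hns : ¬ A.Spanning X := fun h => hne ((Matroid.spanning_iff_closure_eq hXE).1 h)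
  obtain ⟨H, hH, hXH⟩ := exists_hyperplane_superset hXE hns
  have hstar : ∀ s ∈ J, starv s ⊆ H := by
    intro s hs
    exact (subset_iUnion₂ (s := fun s _ => starv s) s hs).trans hXH
  have hJsub : J ⊆ {v | v ∈ supp H ∧ valence H v = Fintype.card V - 1} := by
    intro s hs
    have hsub1 : {e ∈ H | s ∈ e} ⊆ starv s := by
      rintro e ⟨heH, hse⟩
      have := cK_cases (hE ▸ hH.1 heH)
      obtain ⟨x, y, hxy, -, -, rfl⟩ := this
      exact ⟨by simpa [Sym2.isDiag_iff_proj_eq] using hxy, hse⟩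
    have hsub2 : starv s ⊆ {e ∈ H | s ∈ e} := fun e he => ⟨hstar s hs he, he.2⟩
    have hval : valence H s = (starv s).ncard := by
      rw [valence]
      congr 1
      exact subset_antisymm hsub1 hsub2
    have hstarcard : (starv s).ncard = Fintype.card V - 1 := ncard_starv s
    have hsupp : s ∈ supp H := by
      obtain ⟨t, ht⟩ : ∃ t : V, t ≠ s := by
        have : 1 < (univ : Set V).ncard := by rw [ncard_univ_V]; omega
        obtain ⟨a, b, -, -, hab⟩ := (one_lt_ncard_iff (toFinite _)).1 this
        rcases eq_or_ne a s with rfl | h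
        · exact ⟨b, Ne.symm hab⟩
        · exact ⟨a, h⟩
      refine ⟨s(s, t), hstar s hs ⟨?_, by simp⟩, by simp⟩
      simp only [Sym2.isDiag_iff_proj_eq]
      exact fun h => ht h.symm
    exact ⟨hsupp, hval.trans hstarcard⟩
  have := ncard_le_ncard hJsub (toFinite _)
  have := hH1 H hH
  omega

/-- Δ_v^S is the complement-flat used everywhere; here: sets contained in it stay there -/
lemma mem_Delta_iff {v : V} {S : Set V} {x y : V} :
    s(x, y) ∈ Delta v S ↔ (x ≠ y) ∧ ((x = v ∧ y ∈ S) ∨ (y = v ∧ x ∈ S) ∨ (x ≠ v ∧ y ≠ v)) := by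
  constructor
  · rintro (h | h)
    · obtain ⟨hxy, hx, hy⟩ := mem_cK.1 h
      rcases hx with rfl | hx
      · rcases hy with hy | hy
        · exact absurd hy.symm hxy
        · exact ⟨hxy, Or.inl ⟨rfl, hy⟩⟩
      · rcases hy with rfl | hy
        · exact ⟨hxy, Or.inr (Or.inl ⟨rfl, hx⟩)⟩
        · rcases eq_or_ne x v with rfl | hxv
          · exact ⟨hxy, Or.inl ⟨rfl, hy⟩⟩
          rcases eq_or_ne y v with rfl | hyv
          · exact ⟨hxy, Or.inr (Or.inl ⟨rfl, hx⟩)⟩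
          · exact ⟨hxy, Or.inr (Or.inr ⟨hxv, hyv⟩)⟩
    · obtain ⟨hxy, hx, hy⟩ := mem_cK.1 h
      exact ⟨hxy, Or.inr (Or.inr ⟨hx, hy⟩)⟩
  · rintro ⟨hxy, (⟨rfl, hy⟩ | ⟨rfl, hx⟩ | ⟨hx, hy⟩)⟩
    · exact Or.inl (mem_cK.2 ⟨hxy, Or.inl rfl, Or.inr hy⟩)
    · exact Or.inl (mem_cK.2 ⟨hxy, Or.inr hx, Or.inl rfl⟩)
    · exact Or.inr (mem_cK.2 ⟨hxy, hx, hy⟩)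

lemma cK_subset_Delta {v : V} {S U : Set V} (hv : v ∉ U) : cK U ⊆ Delta v S := by
  intro e he
  obtain ⟨x, y, hxy, hx, hy, rfl⟩ := cK_cases he
  exact mem_Delta_iff.2 ⟨hxy, Or.inr (Or.inr ⟨fun h => hv (h ▸ hx), fun h => hv (h ▸ hy)⟩)⟩

/-- every complete graph is a flat -/
lemma cK_flat (hm : 0 < m) (hV : m + 1 ≤ Fintype.card V)
    (hE : A.E = cK (univ : Set V))
    (hDF : ∀ (v : V) (S : Set V), v ∉ S → S.ncard = m - 1 → A.closure (Delta v S) = Delta v S)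
    (U : Set V) : A.closure (cK U) = cK U := by
  refine subset_antisymm ?_ (A.subset_closure _ (cK_subset_ground hE U))
  intro e he
  have heE : e ∈ A.E := A.mem_ground_of_mem_closure he
  obtain ⟨x, y, hxy, -, -, rfl⟩ := cK_cases (hE ▸ heE)
  by_contra hecK
  have key : ∀ a b : V, a ∉ U → a ≠ b → s(a, b) ∈ A.closure (cK U) → False := by
    intro a b ha hab hmem
    obtain ⟨S, -, hS2, hS3⟩ := exists_between_ncard (n := m - 1) (empty_subset (univ \ {a, b}))
      (by simp) (by
        rw [ncard_diff (subset_univ _) (toFinite _), ncard_univ_V]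
        have : ({a, b} : Set V).ncard ≤ 2 := by
          apply (ncard_insert_le _ _).trans; simp
        omega)
    have haS : a ∉ S := fun h => (hS2 h).2 (by simp)
    have hbS : b ∉ S := fun h => (hS2 h).2 (by simp)
    have hflat := hDF a S haS hS3
    have hsub : cK U ⊆ Delta a S := cK_subset_Delta ha
    have : s(a, b) ∈ Delta a S := hflat ▸ (A.closure_subset_closure hsub) hmem
    rw [mem_Delta_iff] at this
    obtain ⟨-, (⟨-, h⟩ | ⟨h, -⟩ | ⟨h, -⟩)⟩ := this
    · exact hbS h
    · exact hab h.symm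
    · exact h rfl
  have hnot : ¬(x ∈ U ∧ y ∈ U) := fun ⟨h1, h2⟩ => hecK (mem_cK.2 ⟨hxy, h1, h2⟩)
  rcases Classical.em (x ∈ U) with hx | hx
  · have hy : y ∉ U := fun h => hnot ⟨hx, h⟩
    exact key y x hy (Ne.symm hxy) (Sym2.eq_swap ▸ he)
  · exact key x y hx hxy he

/-- the exchange/stripping lemma -/
lemma strip_lemma (hE : A.E = cK (univ : Set V)) :
    ∀ (n : ℕ) (D R X : Set (Sym2 V)) (e : Sym2 V), D.ncard ≤ n → X ⊆ R → R ⊆ A.E → e ∈ R →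
    D ⊆ A.E →
    (∀ d ∈ D, d ∉ A.closure (R ∪ (D \ {d}))) →
    e ∈ A.closure (X ∪ D) → e ∈ A.closure X := by
  intro n
  induction n with
  | zero =>
    intro D R X e hD _ _ _ _ _ hmem
    rw [(ncard_eq_zero (toFinite D)).1 (by omega)] at hmem
    simpa using hmem
  | succ n ih =>
    intro D R X e hD hXR hRE heR hDE hind hmem
    rcases eq_empty_or_nonempty D with rfl | ⟨d, hd⟩
    · simpa using hmem
    rcases Classical.em (e ∈ A.closure (X ∪ (D \ {d}))) with h | h
    · refine ih (D \ {d}) R X e ?_ hXR hRE heR (diff_subset.trans hDE) ?_ h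
      · have : d ∈ D := hd
        have h1 := ncard_diff_singleton_add_one hd (toFinite D)
        omega
      · intro d' hd'
        refine fun hmem' => hind d' (diff_subset hd') ?_
        refine A.closure_subset_closure ?_ hmem'
        exact union_subset_union_right _ (diff_subset_diff_left diff_subset)
    · exfalso
      have hXD : X ∪ D = insert d (X ∪ (D \ {d})) := by
        ext f
        simp only [mem_union, mem_insert_iff, mem_diff, mem_singleton_iff]
        constructor
        · rintro (hf | hf)
          · exact Or.inr (Or.inl hf)
          · rcases eq_or_ne f d with rfl | hfd
            · exact Or.inl rfl
            · exact Or.inr (Or.inr ⟨hf, hfd⟩)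
        · rintro (rfl | hf | hf)
          · exact Or.inr hd
          · exact Or.inl hf
          · exact Or.inr hf.1
      rw [hXD] at hmem
      have hexch := Matroid.closure_exchange (M := A) (X := X ∪ (D \ {d})) (e := e) (f := d)
        ⟨hmem, h⟩
      refine hind d hd ?_
      refine A.closure_subset_closure ?_ hexch.1
      exact insert_subset (Or.inl heR) (union_subset_union_left _ hXR)

/-- edges from J to outside U are "independent over cK U" -/
lemma Dindep (hm : 0 < m) (hV : m + 1 ≤ Fintype.card V)
    (hE : A.E = cK (univ : Set V))
    (hDF : ∀ (v : V) (S : Set V), v ∉ S → S.ncard = m - 1 → A.closure (Delta v S) = Delta v S)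
    {U J : Set V} (hJU : J ⊆ U) (hJ : J.ncard = m)
    {D : Set (Sym2 V)} (hD : D = {e | ∃ s ∈ J, ∃ u, u ∉ U ∧ e = s(s, u)}) :
    ∀ d ∈ D, d ∉ A.closure (cK U ∪ (D \ {d})) := by
  intro d hd hmem
  obtain ⟨s₀, hs₀, u₀, hu₀, rfl⟩ := hD ▸ hd
  have hs₀u₀ : s₀ ≠ u₀ := fun h => hu₀ (h ▸ hJU hs₀)
  have hu₀J : u₀ ∉ J \ {s₀} := fun h => hu₀ (hJU h.1)
  have hcard : (J \ {s₀}).ncard = m - 1 := by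
    rw [ncard_diff_singleton_of_mem hs₀, hJ]
  have hflat := hDF u₀ (J \ {s₀}) hu₀J hcard
  have hsub : cK U ∪ (D \ {s(s₀, u₀)}) ⊆ Delta u₀ (J \ {s₀}) := by
    refine union_subset (cK_subset_Delta hu₀) ?_
    rintro d' ⟨hd', hne⟩
    obtain ⟨s₁, hs₁, u₁, hu₁, rfl⟩ := hD ▸ hd'
    have hs₁u₁ : s₁ ≠ u₁ := fun h => hu₁ (h ▸ hJU hs₁)
    rcases eq_or_ne u₁ u₀ with rfl | hu
    · have hs : s₁ ≠ s₀ := by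
        rintro rfl
        exact hne (mem_singleton_iff.2 rfl)
      rw [Sym2.eq_swap]
      refine mem_Delta_iff.2 ⟨Ne.symm hs₁u₁, Or.inl ⟨rfl, mem_diff_of_mem hs₁ ?_⟩⟩
      exact fun h => hs (mem_singleton_iff.1 h)
    · refine mem_Delta_iff.2 ⟨hs₁u₁, Or.inr (Or.inr ⟨?_, ?_⟩)⟩
      · exact fun h => hu₀ (h ▸ hJU hs₁)
      · exact hu
  have : s(s₀, u₀) ∈ Delta u₀ (J \ {s₀}) := hflat ▸ (A.closure_subset_closure hsub) hmem
  rw [Sym2.eq_swap, mem_Delta_iff] at this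
  obtain ⟨-, (⟨-, h⟩ | ⟨h, -⟩ | ⟨h, -⟩)⟩ := this
  · exact h.2 rfl
  · exact hs₀u₀ h
  · exact h rfl

end Core

section Core2

open Matroid Set

variable {V : Type*} [Fintype V] [DecidableEq V] {m : ℕ} {A : Matroid (Sym2 V)}

lemma vjoin_subset_ground (hE : A.E = cK (univ : Set V)) {v : V} {J : Set V} (hv : v ∉ J) :
    vjoin v J ⊆ A.E := by
  rw [hE]
  exact vjoin_subset_cK (mem_univ v) (subset_univ J) hv

lemma cK_insert_eq {v : V} {U : Set V} (hv : v ∉ U) :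
    cK (insert v U) = cK U ∪ vjoin v U := by
  ext e
  constructor
  · intro he
    obtain ⟨a, c, hac, ha, hc, rfl⟩ := cK_cases he
    rcases ha with rfl | ha
    · rcases hc with rfl | hc
      · exact absurd rfl hac
      · exact Or.inr ⟨c, hc, rfl⟩
    · rcases hc with rfl | hc
      · exact Or.inr ⟨a, ha, Sym2.eq_swap⟩
      · exact Or.inl (mem_cK.2 ⟨hac, ha, hc⟩)
  · rintro (he | ⟨u, hu, rfl⟩)
    · exact cK_mono (subset_insert _ _) he
    · exact mem_cK.2 ⟨fun h => hv (h ▸ hu), mem_insert _ _, Or.inr hu⟩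

/-- vertex attachment: gluing a new vertex along `m` edges -/
lemma attach (hm : 0 < m) (hV : m + 1 ≤ Fintype.card V)
    (hE : A.E = cK (univ : Set V))
    (hDF : ∀ (v : V) (S : Set V), v ∉ S → S.ncard = m - 1 → A.closure (Delta v S) = Delta v S)
    (hQ : ∀ J : Set V, J.ncard = m → A.closure (⋃ s ∈ J, starv s) = A.E)
    {U J : Set V} {v : V} (hJU : J ⊆ U) (hJ : J.ncard = m) (hv : v ∉ U) :
    cK (insert v U) ⊆ A.closure (cK U ∪ vjoin v J) := by
  have hvJ : v ∉ J := fun h => hv (hJU h)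
  have hXE : cK U ∪ vjoin v J ⊆ A.E :=
    union_subset (cK_subset_ground hE U) (vjoin_subset_ground hE hvJ)
  have main : ∀ b ∈ U, s(v, b) ∈ A.closure (cK U ∪ vjoin v J) := by
    intro b hb
    have hvb : v ≠ b := fun h => hv (h ▸ hb)
    rcases Classical.em (b ∈ J) with hbJ | hbJ
    · exact A.subset_closure _ hXE (Or.inr ⟨b, hbJ, rfl⟩)
    set D : Set (Sym2 V) := {e | ∃ s ∈ J, ∃ u, u ∉ insert v U ∧ e = s(s, u)} with hD
    have hDE : D ⊆ A.E := by
      rintro e ⟨s', hs', u, hu, rfl⟩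
      rw [hE]
      exact mem_cK.2 ⟨fun h => hu (h ▸ mem_insert_of_mem _ (hJU hs')), trivial, trivial⟩
    have hXR : cK U ∪ vjoin v J ⊆ cK (insert v U) :=
      union_subset (cK_mono (subset_insert _ _))
        (vjoin_subset_cK (mem_insert _ _) (hJU.trans (subset_insert _ _)) hvJ)
    have heR : s(v, b) ∈ cK (insert v U) :=
      mem_cK.2 ⟨hvb, mem_insert _ _, mem_insert_of_mem _ hb⟩
    have hind := Dindep hm hV hE hDF (U := insert v U) (J := J)
      (hJU.trans (subset_insert _ _)) hJ (D := D) rfl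
    have hstars : (⋃ s ∈ J, starv s) ⊆ (cK U ∪ vjoin v J) ∪ D := by
      rintro f hf
      simp only [mem_iUnion] at hf
      obtain ⟨s', hs', hnd, hsf⟩ := hf
      induction f with
      | _ a c =>
        have key : ∀ a c : V, s(a, c) ∈ (starv s' : Set (Sym2 V)) → a = s' →
            s(a, c) ∈ (cK U ∪ vjoin v J) ∪ D := by
          rintro a c ⟨hnd', -⟩ rfl
          have hac : a ≠ c := by
            intro h
            exact hnd' (by simp [Sym2.isDiag_iff_proj_eq, h])
          rcases Classical.em (c ∈ U) with hcU | hcU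
          · exact Or.inl (Or.inl (mem_cK.2 ⟨hac, hJU hs', hcU⟩))
          rcases eq_or_ne c v with rfl | hcv
          · exact Or.inl (Or.inr ⟨a, hs', Sym2.eq_swap⟩)
          · refine Or.inr ⟨a, hs', c, ?_, rfl⟩
            intro hmem
            rcases hmem with rfl | hmem
            · exact hcv rfl
            · exact hcU hmem
        rcases Sym2.mem_iff.1 hsf with rfl | rfl
        · exact key _ _ ⟨hnd, hsf⟩ rfl
        · rw [Sym2.eq_swap]
          exact key _ _ ⟨by rwa [Sym2.eq_swap], Sym2.mem_iff.2 (Or.inl rfl)⟩ rfl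
    have hmem : s(v, b) ∈ A.closure ((cK U ∪ vjoin v J) ∪ D) := by
      have h1 : s(v, b) ∈ A.E := by
        rw [hE]; exact mem_cK.2 ⟨hvb, trivial, trivial⟩
      have h2 : A.E = A.closure (⋃ s ∈ J, starv s) := (hQ J hJ).symm
      exact A.closure_subset_closure hstars (h2 ▸ h1)
    exact strip_lemma hE D.ncard D (cK (insert v U)) (cK U ∪ vjoin v J) (s(v, b))
      le_rfl hXR (cK_subset_ground hE _) heR hDE hind hmem
  intro e he
  obtain ⟨a, c, hac, ha, hc, rfl⟩ := cK_cases he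
  rcases ha with rfl | ha
  · rcases hc with rfl | hc
    · exact absurd rfl hac
    · exact main c hc
  · rcases hc with rfl | hc
    · rw [Sym2.eq_swap]; exact main a ha
    · exact A.subset_closure _ hXE (Or.inl (mem_cK.2 ⟨hac, ha, hc⟩))

/-- gluing two complete graphs along at least `m` vertices -/
lemma glue (hm : 0 < m) (hV : m + 1 ≤ Fintype.card V)
    (hE : A.E = cK (univ : Set V))
    (hDF : ∀ (v : V) (S : Set V), v ∉ S → S.ncard = m - 1 → A.closure (Delta v S) = Delta v S)
    (hQ : ∀ J : Set V, J.ncard = m → A.closure (⋃ s ∈ J, starv s) = A.E) :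
    ∀ (N : ℕ) (U₁ U₂ : Set V), (U₂ \ U₁).ncard ≤ N → m ≤ (U₁ ∩ U₂).ncard →
    A.closure (cK U₁ ∪ cK U₂) = cK (U₁ ∪ U₂) := by
  intro N
  induction N with
  | zero =>
    intro U₁ U₂ hN hint
    have hsub : U₂ ⊆ U₁ := diff_eq_empty.1 ((ncard_eq_zero (toFinite _)).1 (by omega))
    rw [union_eq_self_of_subset_right (cK_mono hsub), union_eq_self_of_subset_right hsub]
    exact cK_flat hm hV hE hDF U₁
  | succ N ih =>
    intro U₁ U₂ hN hint
    rcases Classical.em (U₂ ⊆ U₁) with hsub | hsub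
    · rw [union_eq_self_of_subset_right (cK_mono hsub), union_eq_self_of_subset_right hsub]
      exact cK_flat hm hV hE hDF U₁
    obtain ⟨y, hy2, hy1⟩ := not_subset.1 hsub
    obtain ⟨J, hJsub, hJcard⟩ := Set.exists_subset_card_eq (s := U₁ ∩ U₂) hint
    have hJ1 : J ⊆ U₁ := hJsub.trans inter_subset_left
    have hJ2 : J ⊆ U₂ := hJsub.trans inter_subset_right
    have hyJ : y ∉ J := fun h => hy1 (hJ1 h)
    have h1 := attach hm hV hE hDF hQ hJ1 hJcard hy1
    have h2 : vjoin y J ⊆ cK U₂ := vjoin_subset_cK hy2 hJ2 hyJ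
    have h3 : cK (insert y U₁) ⊆ A.closure (cK U₁ ∪ cK U₂) :=
      h1.trans (A.closure_subset_closure (union_subset_union_right _ h2))
    have h4 : cK (insert y U₁) ∪ cK U₂ ⊆ A.closure (cK U₁ ∪ cK U₂) :=
      union_subset h3 (subset_union_right.trans
        (A.subset_closure _ (union_subset (cK_subset_ground hE _) (cK_subset_ground hE _))))
    have hC : A.closure (cK U₁ ∪ cK U₂) = A.closure (cK (insert y U₁) ∪ cK U₂) := by
      refine subset_antisymm ?_ (Matroid.closure_subset_closure_of_subset_closure h4)
      exact A.closure_subset_closure (union_subset_union_left _ (cK_mono (subset_insert _ _)))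
    have hdiffeq : U₂ \ insert y U₁ = (U₂ \ U₁) \ {y} := by
      ext a
      simp only [mem_diff, mem_insert_iff, mem_singleton_iff]
      tauto
    have hNle : (U₂ \ insert y U₁).ncard ≤ N := by
      rw [hdiffeq]
      have := ncard_diff_singleton_add_one (show y ∈ U₂ \ U₁ from ⟨hy2, hy1⟩) (toFinite _)
      omega
    have hint2 : m ≤ ((insert y U₁) ∩ U₂).ncard :=
      hint.trans (ncard_le_ncard (inter_subset_inter_left _ (subset_insert _ _)) (toFinite _))
    have hseteq : insert y U₁ ∪ U₂ = U₁ ∪ U₂ := by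
      ext a
      simp only [mem_union, mem_insert_iff]
      constructor
      · rintro ((rfl | h) | h)
        · exact Or.inr hy2
        · exact Or.inl h
        · exact Or.inr h
      · rintro (h | h)
        · exact Or.inl (Or.inr h)
        · exact Or.inr h
    rw [hC, ih (insert y U₁) U₂ hNle hint2, hseteq]

lemma starindep (hm : 0 < m) (hV : m + 1 ≤ Fintype.card V)
    (hE : A.E = cK (univ : Set V))
    (hDF : ∀ (v : V) (S : Set V), v ∉ S → S.ncard = m - 1 → A.closure (Delta v S) = Delta v S) :
    ∀ (k : ℕ) (U J : Set V) (v : V), v ∉ U → J ⊆ U → J.ncard = k → k ≤ m →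
    erx A (cK U ∪ vjoin v J) = erx A (cK U) + (k : ℕ∞) := by
  intro k
  induction k with
  | zero =>
    intro U J v hv hJU hJ hkm
    rw [(ncard_eq_zero (toFinite J)).1 hJ]
    simp [vjoin]
  | succ k ih =>
    intro U J v hv hJU hJ hkm
    obtain ⟨s', hs'⟩ := nonempty_of_ncard_ne_zero (s := J) (by omega)
    set J' := J \ {s'} with hJ'
    have hJ'card : J'.ncard = k := by
      rw [hJ']
      have := ncard_diff_singleton_add_one hs' (toFinite J)
      omega
    have hvs' : v ≠ s' := fun h => hv (h ▸ hJU hs')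
    have hih := ih U J' v hv (diff_subset.trans hJU) hJ'card (by omega)
    have hvJ' : v ∉ J' := fun h => hv (hJU (diff_subset h))
    obtain ⟨S, hS1, hS2, hS3⟩ := exists_between_ncard (n := m - 1)
      (show J' ⊆ univ \ {v, s'} by
        intro j hj
        refine ⟨trivial, ?_⟩
        rintro (rfl | rfl)
        · exact hv (hJU (diff_subset hj))
        · exact hj.2 rfl)
      (by omega)
      (by
        rw [ncard_diff (subset_univ _) (toFinite _), ncard_univ_V]
        have h2 : ({v, s'} : Set V).ncard ≤ 2 := by
          apply (ncard_insert_le _ _).trans; simp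
        omega)
    have hvS : v ∉ S := fun h => (hS2 h).2 (Or.inl rfl)
    have hs'S : s' ∉ S := fun h => (hS2 h).2 (Or.inr rfl)
    have hflat := hDF v S hvS hS3
    have hnotmem : s(v, s') ∉ A.closure (cK U ∪ vjoin v J') := by
      intro hmem
      have hsub : cK U ∪ vjoin v J' ⊆ Delta v S := by
        refine union_subset (cK_subset_Delta hv) ?_
        refine (vjoin_subset_cK (show v ∈ {v} ∪ S from Or.inl rfl)
          (hS1.trans subset_union_right) ?_).trans subset_union_left
        exact fun h => hvJ' h
      have : s(v, s') ∈ Delta v S := hflat ▸ (A.closure_subset_closure hsub) hmem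
      rw [mem_Delta_iff] at this
      obtain ⟨-, (⟨-, h⟩ | ⟨h, -⟩ | ⟨h, -⟩)⟩ := this
      · exact hs'S h
      · exact hvs' h.symm
      · exact h rfl
    have hseteq : cK U ∪ vjoin v J = insert (s(v, s')) (cK U ∪ vjoin v J') := by
      have : J = insert s' J' := by
        rw [hJ', insert_diff_singleton, insert_eq_self.2 hs']
      rw [this, vjoin_insert, union_insert]
    rw [hseteq, erx_insert_of_not_mem_closure A
      (union_subset (cK_subset_ground hE U) (vjoin_subset_ground hE hvJ'))
      (by rw [hE]; exact mem_cK.2 ⟨hvs', trivial, trivial⟩) hnotmem, hih]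
    push_cast
    ring

lemma erx_insert_vertex (hm : 0 < m) (hV : m + 1 ≤ Fintype.card V)
    (hE : A.E = cK (univ : Set V))
    (hDF : ∀ (v : V) (S : Set V), v ∉ S → S.ncard = m - 1 → A.closure (Delta v S) = Delta v S)
    (hQ : ∀ J : Set V, J.ncard = m → A.closure (⋃ s ∈ J, starv s) = A.E)
    {U : Set V} {v : V} (hv : v ∉ U) (hU : m ≤ U.ncard) :
    erx A (cK (insert v U)) = erx A (cK U) + (m : ℕ∞) := by
  obtain ⟨J, hJU, hJcard⟩ := Set.exists_subset_card_eq (s := U) hU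
  have hvJ : v ∉ J := fun h => hv (hJU h)
  have hle1 : cK U ∪ vjoin v J ⊆ cK (insert v U) :=
    union_subset (cK_mono (subset_insert _ _))
      (vjoin_subset_cK (mem_insert _ _) (hJU.trans (subset_insert _ _)) hvJ)
  have hle2 := attach hm hV hE hDF hQ hJU hJcard hv
  have hs := starindep hm hV hE hDF m U J v hv hJU hJcard le_rfl
  refine le_antisymm ?_ ?_
  · have := erx_mono A hle2
    rwa [erx_closure_eq A (union_subset (cK_subset_ground hE U)
      (vjoin_subset_ground hE hvJ)), hs] at this
  · rw [← hs]
    exact erx_mono A hle1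

lemma erx_cK_chain (hm : 0 < m) (hV : m + 1 ≤ Fintype.card V)
    (hE : A.E = cK (univ : Set V))
    (hDF : ∀ (v : V) (S : Set V), v ∉ S → S.ncard = m - 1 → A.closure (Delta v S) = Delta v S)
    (hQ : ∀ J : Set V, J.ncard = m → A.closure (⋃ s ∈ J, starv s) = A.E) :
    ∀ (N : ℕ) (U W : Set V), W ⊆ U → m ≤ W.ncard → (U \ W).ncard = N →
    erx A (cK U) = erx A (cK W) + ((m * N : ℕ) : ℕ∞) := by
  intro N
  induction N with
  | zero =>
    intro U W hWU hW hN
    have hUW : U = W :=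
      subset_antisymm (diff_eq_empty.1 ((ncard_eq_zero (toFinite _)).1 hN)) hWU
    rw [hUW]
    simp
  | succ N ih =>
    intro U W hWU hW hN
    obtain ⟨v, hv⟩ := nonempty_of_ncard_ne_zero (s := U \ W) (by omega)
    have hvU : v ∈ U := hv.1
    have hvW : v ∉ W := hv.2
    set U' := U \ {v} with hU'
    have hWU' : W ⊆ U' := fun w hw => ⟨hWU hw, fun h => hvW (mem_singleton_iff.1 h ▸ hw)⟩
    have hdiff : (U' \ W).ncard = N := by
      have heq : U' \ W = (U \ W) \ {v} := by
        ext a; simp only [hU', mem_diff, mem_singleton_iff]; tauto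
      rw [heq]
      have := ncard_diff_singleton_add_one hv (toFinite _)
      omega
    have hvU' : v ∉ U' := fun h => h.2 rfl
    have hins : insert v U' = U := by
      rw [hU', insert_diff_singleton, insert_eq_self.2 hvU]
    have hU'card : m ≤ U'.ncard := hW.trans (ncard_le_ncard hWU' (toFinite _))
    rw [← hins, erx_insert_vertex hm hV hE hDF hQ hvU' hU'card,
      ih U' W hWU' hW hdiff]
    push_cast
    ring

end Core2

section Core3

open Matroid Set

variable {V : Type*} [Fintype V] [DecidableEq V] {m : ℕ} {A : Matroid (Sym2 V)}

lemma erx_ne_top {α : Type*} [Finite α] (M : Matroid α) (X : Set α) : erx M X ≠ ⊤ := by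
  rw [erx]
  exact encard_ne_top_iff.2 (toFinite (M.exists_isBasis' X).choose)

lemma Hm_nonspanning (hm : 0 < m) (hV : m + 1 ≤ Fintype.card V)
    (hE : A.E = cK (univ : Set V))
    (hDF : ∀ (v : V) (S : Set V), v ∉ S → S.ncard = m - 1 → A.closure (Delta v S) = Delta v S)
    (hQ : ∀ J : Set V, J.ncard = m → A.closure (⋃ s ∈ J, starv s) = A.E)
    {V₁ V₂ : Set V} (hu : V₁ ∪ V₂ = univ) (hi : (V₁ ∩ V₂).ncard = m - 1)
    {x y : V} (hx : x ∈ V₁ \ V₂) (hy : y ∈ V₂ \ V₁) :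
    ¬ A.Spanning (cK V₁ ∪ cK V₂) := by
  intro hsp
  set I := V₁ ∩ V₂ with hI
  set p := (V₁ \ V₂).ncard with hp
  set t := (V₂ \ V₁).ncard with ht
  have hxI : x ∉ I := fun h => hx.2 h.2
  have hyI : y ∉ I := fun h => hy.2 h.1
  have hp1 : 1 ≤ p := (ncard_pos (toFinite _)).2 ⟨x, hx⟩
  have ht1 : 1 ≤ t := (ncard_pos (toFinite _)).2 ⟨y, hy⟩
  have hWcard : (insert x I).ncard = m := by
    rw [ncard_insert_of_notMem hxI (toFinite _), hi]; omega
  have hW2card : (insert y I).ncard = m := by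
    rw [ncard_insert_of_notMem hyI (toFinite _), hi]; omega
  have hWV₁ : insert x I ⊆ V₁ := insert_subset hx.1 inter_subset_left
  have hW2V₂ : insert y I ⊆ V₂ := insert_subset hy.1 inter_subset_right
  -- cardinal bookkeeping
  have hV₁card : V₁.ncard = p + (m - 1) := by
    have hdisj : Disjoint (V₁ \ V₂) I :=
      disjoint_of_subset_right inter_subset_right disjoint_sdiff_left
    have hsplit : (V₁ \ V₂) ∪ I = V₁ := by
      ext a; simp only [mem_union, mem_diff, hI, mem_inter_iff]; tauto
    rw [← hsplit, ncard_union_eq hdisj (toFinite _) (toFinite _), hi]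
  have hncard : Fintype.card V = p + (m - 1) + t := by
    have hdisj : Disjoint V₁ (V₂ \ V₁) := disjoint_sdiff_right
    have hsplit : V₁ ∪ (V₂ \ V₁) = univ := by
      rw [← hu]; ext a; simp only [mem_union, mem_diff]; tauto
    have := ncard_union_eq hdisj (toFinite V₁) (toFinite _)
    rw [hsplit, ncard_univ_V] at this
    omega
  have hd1 : V₁ \ insert x I = (V₁ \ V₂) \ {x} := by
    ext a
    simp only [mem_diff, mem_insert_iff, hI, mem_inter_iff, mem_singleton_iff]
    tauto
  have hd1card : (V₁ \ insert x I).ncard = p - 1 := by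
    rw [hd1, ncard_diff_singleton_of_mem hx]
  have hd2 : V₂ \ insert y I = (V₂ \ V₁) \ {y} := by
    ext a
    simp only [mem_diff, mem_insert_iff, hI, mem_inter_iff, mem_singleton_iff]
    tauto
  have hd2card : (V₂ \ insert y I).ncard = t - 1 := by
    rw [hd2, ncard_diff_singleton_of_mem hy]
  have hduniv : (univ \ insert x I).ncard = (p - 1) + t := by
    rw [ncard_diff (subset_univ _) (toFinite _), ncard_univ_V, hWcard]
    omega
  have chain1 : erx A (cK V₁) = erx A (cK (insert x I)) + ((m * (p - 1) : ℕ) : ℕ∞) :=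
    erx_cK_chain hm hV hE hDF hQ _ V₁ (insert x I) hWV₁ (le_of_eq hWcard.symm) hd1card
  have chain2 : erx A (cK univ) = erx A (cK (insert x I)) + ((m * ((p - 1) + t) : ℕ) : ℕ∞) :=
    erx_cK_chain hm hV hE hDF hQ _ univ (insert x I) (subset_univ _)
      (le_of_eq hWcard.symm) hduniv
  have hIy : erx A (cK (insert y I)) = erx A (cK I) + ((m - 1 : ℕ) : ℕ∞) := by
    rw [cK_insert_eq hyI]
    exact starindep hm hV hE hDF (m - 1) I I y hyI subset_rfl hi (by omega)
  have chain3 : erx A (cK V₂) = erx A (cK I) + ((m - 1 : ℕ) : ℕ∞) + ((m * (t - 1) : ℕ) : ℕ∞) := by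
    rw [erx_cK_chain hm hV hE hDF hQ _ V₂ (insert y I) hW2V₂ (le_of_eq hW2card.symm) hd2card,
      hIy]
  have hsubmod : erx A (cK V₁ ∪ cK V₂) + erx A (cK I) ≤ erx A (cK V₁) + erx A (cK V₂) := by
    have := erx_submod A (X := cK V₁) (Y := cK V₂) (cK_subset_ground hE _)
      (cK_subset_ground hE _)
    rwa [cK_inter, ← hI] at this
  have hspan : erx A (cK V₁ ∪ cK V₂) = erx A (cK (insert x I)) + ((m * ((p - 1) + t) : ℕ) : ℕ∞) := by
    have h1 := erx_spanning A (union_subset (cK_subset_ground hE _) (cK_subset_ground hE _)) hsp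
    rw [h1, hE, chain2]
  have hnat : ∀ p' t' : ℕ, 1 ≤ p' → 1 ≤ t' →
      m * ((p' - 1) + t') = (m * (p' - 1) + (m - 1) + m * (t' - 1)) + 1 := by
    intro p' t' hp' ht'
    obtain ⟨t'', rfl⟩ : ∃ t'', t' = t'' + 1 := ⟨t' - 1, by omega⟩
    obtain ⟨m', rfl⟩ : ∃ m', m = m' + 1 := ⟨m - 1, by omega⟩
    simp only [Nat.add_sub_cancel]
    ring
  have hna : erx A (cK (insert x I)) = (((erx A (cK (insert x I))).toNat : ℕ) : ℕ∞) :=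
    (ENat.coe_toNat (erx_ne_top A _)).symm
  have hnb : erx A (cK I) = (((erx A (cK I)).toNat : ℕ) : ℕ∞) :=
    (ENat.coe_toNat (erx_ne_top A _)).symm
  set na := (erx A (cK (insert x I))).toNat
  set nb := (erx A (cK I)).toNat
  rw [hspan, chain1, chain3, hna, hnb] at hsubmod
  have hfin : na + m * ((p - 1) + t) + nb ≤ na + m * (p - 1) + (nb + (m - 1) + m * (t - 1)) := by
    exact_mod_cast hsubmod
  rw [hnat p t hp1 ht1] at hfin
  generalize m * (p - 1) = B at hfin
  generalize m * (t - 1) = D at hfin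
  omega

lemma G1core (hm : 0 < m) (hV : m + 1 ≤ Fintype.card V)
    (hE : A.E = cK (univ : Set V))
    (hDF : ∀ (v : V) (S : Set V), v ∉ S → S.ncard = m - 1 → A.closure (Delta v S) = Delta v S)
    (hQ : ∀ J : Set V, J.ncard = m → A.closure (⋃ s ∈ J, starv s) = A.E)
    {V₁ V₂ : Set V} (hu : V₁ ∪ V₂ = univ) (hi : (V₁ ∩ V₂).ncard = m - 1)
    {x y : V} (hx : x ∈ V₁ \ V₂) (hy : y ∈ V₂ \ V₁) :
    s(x, y) ∉ A.closure (cK V₁ ∪ cK V₂) := by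
  intro hmem
  set I := V₁ ∩ V₂ with hI
  have hxI : x ∉ I := fun h => hx.2 h.2
  have hyI : y ∉ I := fun h => hy.2 h.1
  have hxy : x ≠ y := fun h => hy.2 (h ▸ hx.1)
  have hWcard : (insert x I).ncard = m := by
    rw [ncard_insert_of_notMem hxI (toFinite _), hi]; omega
  have hWV₁ : insert x I ⊆ V₁ := insert_subset hx.1 inter_subset_left
  have hground : cK V₁ ∪ cK V₂ ⊆ A.E :=
    union_subset (cK_subset_ground hE _) (cK_subset_ground hE _)
  have h1 := attach hm hV hE hDF hQ (U := V₁) (v := y) hWV₁ hWcard hy.2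
  have h2 : vjoin y (insert x I) ⊆ insert (s(x, y)) (cK V₂) := by
    rintro e ⟨u, hu', rfl⟩
    rcases hu' with rfl | huI
    · exact Or.inl Sym2.eq_swap
    · refine Or.inr (mem_cK.2 ⟨?_, hy.1, huI.2⟩)
      exact fun h => hy.2 (h ▸ huI.1)
  have h3 : insert (s(x, y)) (cK V₂) ⊆ A.closure (cK V₁ ∪ cK V₂) :=
    insert_subset hmem (subset_union_right.trans (A.subset_closure _ hground))
  have h4 : cK V₁ ∪ vjoin y (insert x I) ⊆ A.closure (cK V₁ ∪ cK V₂) :=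
    union_subset (subset_union_left.trans (A.subset_closure _ hground)) (h2.trans h3)
  have h5 : cK (insert y V₁) ⊆ A.closure (cK V₁ ∪ cK V₂) :=
    h1.trans (Matroid.closure_subset_closure_of_subset_closure h4)
  have hint : m ≤ ((insert y V₁) ∩ V₂).ncard := by
    have hsub : insert y I ⊆ (insert y V₁) ∩ V₂ := by
      intro a ha
      rcases ha with rfl | ha
      · exact ⟨mem_insert _ _, hy.1⟩
      · exact ⟨mem_insert_of_mem _ ha.1, ha.2⟩
    have hcard : (insert y I).ncard = m := by
      rw [ncard_insert_of_notMem hyI (toFinite _), hi]; omega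
    rw [← hcard]
    exact ncard_le_ncard hsub (toFinite _)
  have hglue := glue hm hV hE hDF hQ (V₂ \ insert y V₁).ncard (insert y V₁) V₂ le_rfl hint
  have hunion : insert y V₁ ∪ V₂ = univ := by
    rw [← hu]
    ext a
    simp only [mem_union, mem_insert_iff]
    constructor
    · rintro ((rfl | h) | h)
      · exact Or.inr hy.1
      · exact Or.inl h
      · exact Or.inr h
    · rintro (h | h)
      · exact Or.inl (Or.inr h)
      · exact Or.inr h
  have hsp : A.Spanning (cK V₁ ∪ cK V₂) := by
    refine (Matroid.spanning_iff_ground_subset_closure hground).2 ?_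
    have hsub2 : cK (insert y V₁) ∪ cK V₂ ⊆ A.closure (cK V₁ ∪ cK V₂) :=
      union_subset h5 (subset_union_right.trans (A.subset_closure _ hground))
    have := Matroid.closure_subset_closure_of_subset_closure hsub2
    rw [hglue, hunion, ← hE] at this
    exact this
  exact Hm_nonspanning hm hV hE hDF hQ hu hi hx hy hsp

end Core3

section Final

open Matroid Set

variable {V : Type*} [Fintype V] [DecidableEq V] {m : ℕ} {A : Matroid (Sym2 V)}

lemma sep_core (hm : 0 < m) (hV : m + 1 ≤ Fintype.card V)
    (hE : A.E = cK (univ : Set V))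
    (hDF : ∀ (v : V) (S : Set V), v ∉ S → S.ncard = m - 1 → A.closure (Delta v S) = Delta v S)
    (hQ : ∀ J : Set V, J.ncard = m → A.closure (⋃ s ∈ J, starv s) = A.E)
    {SE SF : Set V} (hlt : (SE ∩ SF).ncard < m)
    {x y : V} (hx : x ∈ SE \ SF) (hy : y ∈ SF \ SE) :
    s(x, y) ∉ A.closure (cK SE ∪ cK SF) := by
  intro hmem
  have hxy : x ≠ y := fun h => hy.2 (h ▸ hx.1)
  have hIsub : SE ∩ SF ⊆ univ \ {x, y} := by
    rintro i ⟨h1, h2⟩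
    refine ⟨trivial, ?_⟩
    rintro (rfl | rfl)
    · exact hx.2 h2
    · exact hy.2 h1
  obtain ⟨It, hIt1, hIt2, hIt3⟩ := exists_between_ncard (n := m - 1) hIsub (by omega)
    (by
      rw [ncard_diff (subset_univ _) (toFinite _), ncard_univ_V]
      have h2 : ({x, y} : Set V).ncard ≤ 2 := by
        apply (ncard_insert_le _ _).trans; simp
      omega)
  have hxIt : x ∉ It := fun h => (hIt2 h).2 (Or.inl rfl)
  have hyIt : y ∉ It := fun h => (hIt2 h).2 (Or.inr rfl)
  set V₂ : Set V := SF ∪ It with hV₂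
  set V₁ : Set V := V₂ᶜ ∪ It with hV₁
  have hu : V₁ ∪ V₂ = univ := by
    ext a
    simp only [hV₁, mem_union, mem_compl_iff]
    constructor
    · intro; trivial
    · intro
      rcases Classical.em (a ∈ V₂) with h | h
      · rcases h with h | h
        · exact Or.inr (Or.inl h)
        · exact Or.inr (Or.inr h)
      · exact Or.inl (Or.inl h)
  have hicap : V₁ ∩ V₂ = It := by
    ext a
    simp only [hV₁, mem_inter_iff, mem_union, mem_compl_iff]
    constructor
    · rintro ⟨(h1 | h1), h2⟩
      · exact absurd h2 h1
      · exact h1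
    · intro h
      exact ⟨Or.inr h, Or.inr h⟩
  have hxmem : x ∈ V₁ \ V₂ := by
    have hxV₂ : x ∉ V₂ := by
      rintro (h | h)
      · exact hx.2 h
      · exact hxIt h
    exact ⟨Or.inl hxV₂, hxV₂⟩
  have hymem : y ∈ V₂ \ V₁ := by
    have hyV₂ : y ∈ V₂ := Or.inl hy.1
    refine ⟨hyV₂, ?_⟩
    rintro (h | h)
    · exact h hyV₂
    · exact hyIt h
  have hSE : SE ⊆ V₁ := by
    intro a ha
    rcases Classical.em (a ∈ V₂) with h | h
    · rcases h with h | h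
      · exact Or.inr (hIt1 ⟨ha, h⟩)
      · exact Or.inr h
    · exact Or.inl h
  have hSF : SF ⊆ V₂ := subset_union_left
  have hclsub : A.closure (cK SE ∪ cK SF) ⊆ A.closure (cK V₁ ∪ cK V₂) :=
    A.closure_subset_closure (union_subset_union (cK_mono hSE) (cK_mono hSF))
  exact G1core hm hV hE hDF hQ hu (by rw [hicap]; exact hIt3) hxmem hymem (hclsub hmem)

/-- reverse direction: (H1) and (H2) imply ARM -/
lemma reverse_dir (hm : 0 < m) (hV : m + 1 ≤ Fintype.card V)
    (hE : A.E = cK (univ : Set V))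
    (hH1 : ∀ H, A.IsHyperplane H →
      {v | v ∈ supp H ∧ valence H v = Fintype.card V - 1}.ncard ≤ m - 1)
    (hH2 : ∀ (v : V) (S : Set V), v ∉ S → S.ncard = m - 1 →
      A.IsHyperplane (cK ({v} ∪ S) ∪ cK ({v}ᶜ))) :
    IsARMOn m (univ : Set V) A := by
  have hDF : ∀ (v : V) (S : Set V), v ∉ S → S.ncard = m - 1 →
      A.closure (Delta v S) = Delta v S :=
    fun v S h1 h2 => (hH2 v S h1 h2).closure_eq
  have hQ : ∀ J : Set V, J.ncard = m → A.closure (⋃ s ∈ J, starv s) = A.E :=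
    fun J hJ => stars_spanning hm (by omega) hE hH1 hJ
  refine ⟨hE, ?_, ?_⟩
  · -- (G1)
    intro E F hEsub hFsub hlt
    intro e he
    have heE : e ∈ A.E := A.mem_ground_of_mem_closure he
    obtain ⟨x, y, hxy, -, -, rfl⟩ := cK_cases (hE ▸ heE)
    by_contra hnot
    have hkey : s(x, y) ∈ A.closure (cK (supp E) ∪ cK (supp F)) :=
      A.closure_subset_closure
        (union_subset_union (subset_cK_supp hEsub) (subset_cK_supp hFsub)) he
    have hbig : s(x, y) ∈ cK (supp E ∪ supp F) := by
      have h1 : cK (supp E) ∪ cK (supp F) ⊆ cK (supp E ∪ supp F) :=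
        union_subset (cK_mono subset_union_left) (cK_mono subset_union_right)
      have h2 := (A.closure_subset_closure h1).trans_eq (cK_flat hm hV hE hDF _)
      exact h2 hkey
    obtain ⟨-, hxin, hyin⟩ := mem_cK.1 hbig
    have hxySE : ¬(x ∈ supp E ∧ y ∈ supp E) := fun ⟨h1, h2⟩ =>
      hnot (Or.inl (mem_cK.2 ⟨hxy, h1, h2⟩))
    have hxySF : ¬(x ∈ supp F ∧ y ∈ supp F) := fun ⟨h1, h2⟩ =>
      hnot (Or.inr (mem_cK.2 ⟨hxy, h1, h2⟩))
    rcases hxin with hxE | hxF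
    · have hyE : y ∉ supp E := fun h => hxySE ⟨hxE, h⟩
      have hyF : y ∈ supp F := by
        rcases hyin with h | h
        · exact absurd h hyE
        · exact h
      have hxF : x ∉ supp F := fun h => hxySF ⟨h, hyF⟩
      exact sep_core hm hV hE hDF hQ hlt ⟨hxE, hxF⟩ ⟨hyF, hyE⟩ hkey
    · have hyF : y ∉ supp F := fun h => hxySF ⟨hxF, h⟩
      have hyE : y ∈ supp E := by
        rcases hyin with h | h
        · exact h
        · exact absurd h hyF
      have hxE : x ∉ supp E := fun h => hxySE ⟨h, hyE⟩
      have := sep_core hm hV hE hDF hQ (by rwa [inter_comm]) ⟨hxF, hxE⟩ ⟨hyE, hyF⟩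
      rw [union_comm] at this
      exact this hkey
  · -- (G2)
    intro E F hEsub hFsub hrigE hrigF hge
    rw [Rigid] at hrigE hrigF ⊢
    have h1 : A.closure (E ∪ F) = A.closure (cK (supp E) ∪ cK (supp F)) := by
      rw [← A.closure_closure_union_closure_eq_closure_union, hrigE, hrigF]
    rw [h1, glue hm hV hE hDF hQ (supp F \ supp E).ncard (supp E) (supp F) le_rfl hge,
      supp_union]

/-- forward direction -/
lemma forward_dir (hm : 0 < m) (hV : m + 1 ≤ Fintype.card V)
    (hE : A.E = cK (univ : Set V)) (harm : IsARMOn m (univ : Set V) A) :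
    (∀ H, A.IsHyperplane H →
      {v | v ∈ supp H ∧ valence H v = Fintype.card V - 1}.ncard ≤ m - 1) ∧
    (∀ (v : V) (S : Set V), v ∉ S → S.ncard = m - 1 →
      A.IsHyperplane (cK ({v} ∪ S) ∪ cK ({v}ᶜ))) := by
  obtain ⟨-, hG1, hG2⟩ := harm
  have hflat : ∀ U : Set V, A.closure (cK U) = cK U := by
    intro U
    refine subset_antisymm ?_ (A.subset_closure _ (cK_subset_ground hE U))
    have h := hG1 (cK U) ∅ (cK_mono (subset_univ _)) (empty_subset _)
      (by rw [supp_empty, inter_empty, ncard_empty]; exact hm)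
    rw [union_empty, supp_empty, cK_empty, union_empty] at h
    exact h.trans (cK_mono (supp_subset subset_rfl))
  have hrigid : ∀ U : Set V, 2 ≤ U.ncard → Rigid A (cK U) := by
    intro U h2
    rw [Rigid, supp_cK h2]
    exact hflat U
  constructor
  · -- (H1)
    intro H hH
    by_contra hgt
    have hge : m ≤ {v | v ∈ supp H ∧ valence H v = Fintype.card V - 1}.ncard := by omega
    obtain ⟨J, hJsub, hJcard⟩ := Set.exists_subset_card_eq hge
    have hstar : ∀ v ∈ J, starv v ⊆ H := by
      intro v hv
      obtain ⟨-, hval⟩ := hJsub hv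
      have hsub1 : {e ∈ H | v ∈ e} ⊆ starv v := by
        rintro e ⟨heH, hve⟩
        obtain ⟨a, c, hac, -, -, rfl⟩ := cK_cases (hE ▸ hH.1 heH)
        refine ⟨?_, hve⟩
        simp only [Sym2.isDiag_iff_proj_eq]
        exact hac
      have heq : {e ∈ H | v ∈ e} = starv v := by
        refine eq_of_subset_of_ncard_le hsub1 ?_ (toFinite _)
        rw [ncard_starv]
        rw [valence] at hval
        omega
      rw [← heq]
      exact sep_subset _ _
    obtain ⟨e₀, he₀E, he₀H⟩ : ∃ e₀ ∈ A.E, e₀ ∉ H := by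
      by_contra hc
      push_neg at hc
      obtain ⟨B, hB⟩ := A.exists_isBase
      exact hH.2.1 ⟨B, fun b hb => hc b (hB.subset_ground hb), hB⟩
    obtain ⟨x, y, hxy, -, -, rfl⟩ := cK_cases (hE ▸ he₀E)
    have hnd : ¬(s(x, y)).IsDiag := by
      simp only [Sym2.isDiag_iff_proj_eq]; exact hxy
    have hxJ : x ∉ J := fun h => he₀H (hstar x h ⟨hnd, by simp⟩)
    have hyJ : y ∉ J := fun h => he₀H (hstar y h ⟨hnd, by simp⟩)
    have hcx : (insert x J).ncard = m + 1 := by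
      rw [ncard_insert_of_notMem hxJ (toFinite _), hJcard]
    have hcy : (insert y J).ncard = m + 1 := by
      rw [ncard_insert_of_notMem hyJ (toFinite _), hJcard]
    have hinter : (insert x J) ∩ (insert y J) = J := by
      ext a
      simp only [mem_inter_iff, mem_insert_iff]
      constructor
      · rintro ⟨(rfl | h1), (h2 | h2)⟩
        · exact absurd h2 hxy
        · exact h2
        · exact h1
        · exact h1
      · intro h
        exact ⟨Or.inr h, Or.inr h⟩
    have hrig := hG2 (cK (insert x J)) (cK (insert y J)) (cK_mono (subset_univ _))
      (cK_mono (subset_univ _)) (hrigid _ (by omega)) (hrigid _ (by omega))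
      (by rw [supp_cK (by omega), supp_cK (by omega), hinter, hJcard])
    rw [Rigid, supp_union, supp_cK (by omega : 2 ≤ (insert x J).ncard),
      supp_cK (by omega : 2 ≤ (insert y J).ncard)] at hrig
    have hmem : s(x, y) ∈ A.closure (cK (insert x J) ∪ cK (insert y J)) := by
      rw [hrig]
      exact mem_cK.2 ⟨hxy, Or.inl (mem_insert _ _), Or.inr (mem_insert _ _)⟩
    have hsubH : cK (insert x J) ∪ cK (insert y J) ⊆ H := by
      have hpart : ∀ z : V, z ∉ J → cK (insert z J) ⊆ H := by
        intro z hz f hf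
        obtain ⟨a, c, hac, ha, hc, rfl⟩ := cK_cases hf
        have hndf : ¬(s(a, c)).IsDiag := by
          simp only [Sym2.isDiag_iff_proj_eq]; exact hac
        rcases ha with rfl | haJ
        · rcases hc with rfl | hcJ
          · exact absurd rfl hac
          · exact hstar c hcJ ⟨hndf, by simp⟩
        · exact hstar a haJ ⟨hndf, by simp⟩
      exact union_subset (hpart x hxJ) (hpart y hyJ)
    exact he₀H (hH.closure_eq ▸ A.closure_subset_closure hsubH hmem)
  · -- (H2)
    intro v S hvS hS
    have hDset : cK ({v} ∪ S) ∪ cK ({v}ᶜ) ⊆ A.E :=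
      union_subset (cK_subset_ground hE _) (cK_subset_ground hE _)
    have hclosed : A.closure (cK ({v} ∪ S) ∪ cK ({v}ᶜ)) ⊆ cK ({v} ∪ S) ∪ cK ({v}ᶜ) := by
      have h := hG1 (cK ({v} ∪ S)) (cK ({v}ᶜ)) (cK_mono (subset_univ _))
        (cK_mono (subset_univ _)) ?_
      · refine h.trans (union_subset_union (cK_mono (supp_subset subset_rfl))
          (cK_mono (supp_subset subset_rfl)))
      · have h1 : supp (cK ({v} ∪ S)) ∩ supp (cK ({v}ᶜ)) ⊆ S := by
          intro a ha
          have ha1 : a ∈ ({v} ∪ S : Set V) := supp_subset subset_rfl ha.1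
          have ha2 : a ∈ ({v}ᶜ : Set V) := supp_subset subset_rfl ha.2
          rcases ha1 with h | h
          · exact absurd h ha2
          · exact h
        have := ncard_le_ncard h1 (toFinite S)
        rw [hS] at this
        omega
    obtain ⟨w, hwv, hwS⟩ : ∃ w : V, w ≠ v ∧ w ∉ S := by
      have hcard : (insert v S).ncard = m := by
        rw [ncard_insert_of_notMem hvS (toFinite _), hS]; omega
      have : (insert v S).ncard < (univ : Set V).ncard := by
        rw [hcard, ncard_univ_V]; omega
      obtain ⟨w, -, hw⟩ := exists_of_ssubset
        ((subset_univ (insert v S)).ssubset_of_ne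
          (fun h => by rw [h, ncard_univ_V] at hcard; omega))
      refine ⟨w, fun h => hw (h ▸ mem_insert _ _), fun h => hw (mem_insert_of_mem _ h)⟩
    have hvwE : s(v, w) ∈ A.E := by
      rw [hE]; exact mem_cK.2 ⟨hwv.symm, trivial, trivial⟩
    have hvwD : s(v, w) ∉ cK ({v} ∪ S) ∪ cK ({v}ᶜ) := by
      rintro (h | h)
      · obtain ⟨-, -, hw'⟩ := mem_cK.1 h
        rcases hw' with h' | h'
        · exact hwv h'
        · exact hwS h'
      · obtain ⟨-, hv', -⟩ := mem_cK.1 h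
        exact hv' rfl
    refine ⟨hDset, ?_, ?_⟩
    · rintro ⟨B, hBD, hB⟩
      have hcl : A.closure (cK ({v} ∪ S) ∪ cK ({v}ᶜ)) = A.E :=
        hB.closure_of_superset hBD
      exact hvwD (hclosed (by rw [hcl]; exact hvwE))
    · intro H' hss hH'E
      obtain ⟨e₀, he₀H', he₀D⟩ := exists_of_ssubset hss
      obtain ⟨a, c, hac, -, -, rfl⟩ := cK_cases (hE ▸ hH'E he₀H')
      -- e₀ must contain v
      have hve : v ∈ (s(a, c) : Sym2 V) := by
        by_contra hv'
        refine he₀D (Or.inr (mem_cK.2 ⟨hac, ?_, ?_⟩))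
        · exact fun h => hv' (h ▸ Sym2.mem_mk_left a c)
        · exact fun h => hv' (h ▸ Sym2.mem_mk_right a c)
      -- normalize e₀ = s(v, b) with b ∉ S, b ≠ v
      obtain ⟨b, hbv, hbS, he₀eq⟩ : ∃ b : V, b ≠ v ∧ b ∉ S ∧ s(a, c) = s(v, b) := by
        rcases Sym2.mem_iff.1 hve with rfl | rfl
        · refine ⟨c, Ne.symm hac, ?_, rfl⟩
          intro hcS
          exact he₀D (Or.inl (mem_cK.2 ⟨hac, Or.inl rfl, Or.inr hcS⟩))
        · refine ⟨a, fun h => hac h, ?_, Sym2.eq_swap⟩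
          intro haS
          exact he₀D (Or.inl (mem_cK.2 ⟨hac, Or.inr haS, Or.inl rfl⟩))
      rw [he₀eq] at he₀H' he₀D
      -- get spanning of H'
      have hspan : A.E ⊆ A.closure H' := by
        rcases Classical.em (2 ≤ ({v}ᶜ : Set V).ncard) with hbig | hsmall
        · -- main case
          have hbmem : v ∉ insert b S := by
            rintro (h | h)
            · exact hbv h.symm
            · exact hvS h
          have hc1 : (insert v (insert b S)).ncard = m + 1 := by
            rw [ncard_insert_of_notMem hbmem (toFinite _),
              ncard_insert_of_notMem hbS (toFinite _), hS]
            omega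
          have hinter2 : (insert v (insert b S)) ∩ ({v}ᶜ : Set V) = insert b S := by
            ext z
            simp only [mem_inter_iff, mem_insert_iff, mem_compl_iff, mem_singleton_iff]
            constructor
            · rintro ⟨(rfl | h), h2⟩
              · exact absurd rfl h2
              · exact h
            · intro h
              refine ⟨Or.inr h, ?_⟩
              rintro rfl
              exact hbmem h
          have hrig := hG2 (cK (insert v (insert b S))) (cK ({v}ᶜ))
            (cK_mono (subset_univ _)) (cK_mono (subset_univ _))
            (hrigid _ (by omega)) (hrigid _ hbig)
            (by
              rw [supp_cK (by omega), supp_cK hbig, hinter2,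
                ncard_insert_of_notMem hbS (toFinite _), hS]
              omega)
          rw [Rigid, supp_union, supp_cK (by omega : 2 ≤ (insert v (insert b S)).ncard),
            supp_cK hbig] at hrig
          have huniv : insert v (insert b S) ∪ ({v}ᶜ : Set V) = univ := by
            ext z
            simp only [mem_union, mem_insert_iff, mem_compl_iff, mem_singleton_iff]
            constructor
            · intro; trivial
            · intro
              rcases Classical.em (z = v) with rfl | h
              · exact Or.inl (Or.inl rfl)
              · exact Or.inr h
          have hsubH' : cK (insert v (insert b S)) ∪ cK ({v}ᶜ) ⊆ H' := by
            refine union_subset ?_ ((subset_union_right).trans hss.subset)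
            intro f hf
            obtain ⟨z₁, z₂, hz, hz1, hz2, rfl⟩ := cK_cases hf
            rcases Classical.em (v ∈ (s(z₁, z₂) : Sym2 V)) with hvf | hvf
            · -- f = s(v, u) with u ∈ insert b S
              obtain ⟨u, hu, hfeq⟩ : ∃ u, u ∈ insert b S ∧ s(z₁, z₂) = s(v, u) := by
                rcases Sym2.mem_iff.1 hvf with rfl | rfl
                · rcases hz2 with h | h
                  · exact absurd h.symm hz
                  · exact ⟨z₂, h, rfl⟩
                · rcases hz1 with h | h
                  · exact absurd h hz
                  · exact ⟨z₁, h, Sym2.eq_swap⟩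
              rw [hfeq]
              rcases hu with rfl | huS
              · exact he₀H'
              · refine hss.subset (Or.inl (mem_cK.2 ⟨?_, Or.inl rfl, Or.inr huS⟩))
                exact fun h => hvS (h ▸ huS)
            · refine hss.subset (Or.inr (mem_cK.2 ⟨hz, ?_, ?_⟩))
              · exact fun h => hvf (h ▸ Sym2.mem_mk_left z₁ z₂)
              · exact fun h => hvf (h ▸ Sym2.mem_mk_right z₁ z₂)
          rw [hE]
          calc cK univ = cK (insert v (insert b S) ∪ ({v}ᶜ : Set V)) := by rw [huniv]
            _ = A.closure (cK (insert v (insert b S)) ∪ cK ({v}ᶜ)) := by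
                rw [hrig, huniv]
            _ ⊆ A.closure H' := A.closure_subset_closure hsubH'
        · -- degenerate: |V| = 2
          have hn2 : Fintype.card V = 2 := by
            have h1 : ({v}ᶜ : Set V).ncard = Fintype.card V - 1 := by
              rw [show ({v}ᶜ : Set V) = univ \ {v} by ext; simp,
                ncard_diff (subset_univ _) (toFinite _), ncard_univ_V, ncard_singleton]
            omega
          have hEsingle : A.E = {s(v, b)} := by
            rw [hE]
            ext f
            simp only [mem_singleton_iff]
            constructor
            · intro hf
              obtain ⟨z₁, z₂, hz, -, -, rfl⟩ := cK_cases hf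
              have huniv2 : ({v, b} : Set V) = univ := by
                refine eq_of_subset_of_ncard_le (subset_univ _) ?_ (toFinite _)
                rw [ncard_univ_V, hn2, ncard_pair (Ne.symm hbv)]
              have hz1 : z₁ ∈ ({v, b} : Set V) := huniv2 ▸ trivial
              have hz2' : z₂ ∈ ({v, b} : Set V) := huniv2 ▸ trivial
              rcases hz1 with rfl | hz1 <;> rcases hz2' with rfl | hz2'
              · exact absurd rfl hz
              · rw [mem_singleton_iff] at hz2'; rw [hz2']
              · rw [mem_singleton_iff] at hz1; rw [hz1, Sym2.eq_swap]
              · rw [mem_singleton_iff] at hz1 hz2'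
                rw [hz1, hz2'] at hz
                exact absurd rfl hz
            · rintro rfl
              exact mem_cK.2 ⟨hbv.symm, trivial, trivial⟩
          have : A.E ⊆ H' := by
            rw [hEsingle]
            intro f hf
            rw [mem_singleton_iff] at hf
            rw [hf]
            exact he₀H'
          exact this.trans (A.subset_closure H' hH'E)
      have hsp : A.Spanning H' := (Matroid.spanning_iff_ground_subset_closure hH'E).2 hspan
      obtain ⟨B, hB, hBH'⟩ := hsp.exists_isBase_subset
      exact ⟨B, hBH', hB⟩

end Final
theorem stmt_12 {V : Type*} [Fintype V] [DecidableEq V] (m : ℕ) (hm : 0 < m)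
    (hV : m + 1 ≤ Fintype.card V)
    (A : Matroid (Sym2 V)) (hE : A.E = cK (univ : Set V)) :
    IsARMOn m (univ : Set V) A ↔
      ((∀ H, A.IsHyperplane H →
          {v | v ∈ supp H ∧ valence H v = Fintype.card V - 1}.ncard ≤ m - 1) ∧
       (∀ (v : V) (S : Set V), v ∉ S → S.ncard = m - 1 →
          A.IsHyperplane (cK ({v} ∪ S) ∪ cK ({v}ᶜ)))) := by
  constructor
  · exact fun harm => forward_dir hm hV hE harm
  · rintro ⟨hH1, hH2⟩
    exact reverse_dir hm hV hE hH1 hH2
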